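/- Let N ⊴ G with G/N a p-group, and let e be a G-stable central idempotent of kN, where k has characteristic p. Then e is a central idempotent of kG, and there is a unique block idempotent of kG with e as a summand; i.e., a unique block of kG covers the G-stable block of kN corresponding to e. -/

import Mathlib

open MonoidAlgebra

namespace UCB

variable {k : Type} [Field k]

theorem mdrh_apply {G H : Type} [Monoid G] [Monoid H] (f : G →* H) (x : MonoidAlgebra k G) :
    mapDomainRingHom k f x = MonoidAlgebra.mapDomain f x := rfl

theorem mapDomain_comp {M N O : Type} (f : M → N) (g : N → O) (x : MonoidAlgebra k M) :
    MonoidAlgebra.mapDomain (g ∘ f) x = MonoidAlgebra.mapDomain g (MonoidAlgebra.mapDomain f x) := by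
  ext; simp [Finsupp.mapDomain_comp]

theorem mapDomain_id {M : Type} (x : MonoidAlgebra k M) : MonoidAlgebra.mapDomain id x = x := by
  ext; simp

theorem idem_pow {R : Type*} [Monoid R] {s : R} (hs : s * s = s) {m : ℕ} (hm : 0 < m) :
    s ^ m = s := by
  induction m with
  | zero => omega
  | succ n ih =>
    rcases Nat.eq_zero_or_pos n with h | h
    · subst h; simp
    · rw [pow_succ, ih h, hs]

theorem comm_all {G : Type} [Group G] {x : MonoidAlgebra k G}
    (h : ∀ (g : G) (c : k), x * single g c = single g c * x) :
    ∀ r : MonoidAlgebra k G, x * r = r * x := by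
  intro r
  induction r using MonoidAlgebra.induction_linear with
  | zero => simp
  | add f g hf hg => rw [mul_add, add_mul, hf, hg]
  | single g c => exact h g c

theorem single_central {G : Type} [Group G] {w : G} (hw : ∀ v : G, w * v = v * w)
    (r : MonoidAlgebra k G) : single w (1 : k) * r = r * single w 1 :=
  comm_all (fun g c => by
    rw [single_mul_single, single_mul_single, hw, one_mul, mul_one]) r

theorem ker_fst_nilpotent (p : ℕ) [Fact p.Prime] [CharP k p] :
    ∀ (n : ℕ) (Q : Type) [Group Q] [Finite Q], Nat.card Q ≤ n → IsPGroup p Q →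
      ∀ (G : Type) [Group G], ∃ m : ℕ, 0 < m ∧
        ∀ s : MonoidAlgebra k (G × Q),
          mapDomainRingHom k (MonoidHom.fst G Q) s = 0 → s ^ m = 0 := by
  intro n
  induction n with
  | zero =>
    intro Q _ _ hcard _
    exact absurd hcard (by have := Nat.card_pos (α := Q); omega)
  | succ n IH =>
    intro Q _ _ hcard hpQ G _
    by_cases hQ1 : Nat.card Q ≤ 1
    · -- Q is trivial: the map is injective
      have hsub : Subsingleton Q := Finite.card_le_one_iff_subsingleton.mp hQ1
      refine ⟨1, one_pos, fun s hs => ?_⟩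
      have hinj : Function.Injective (Prod.fst : G × Q → G) := fun a b h =>
        Prod.ext h (Subsingleton.elim _ _)
      rw [pow_one]
      apply MonoidAlgebra.mapDomain_injective hinj
      rw [MonoidAlgebra.mapDomain_zero]
      rw [mdrh_apply] at hs
      exact hs
    · haveI hQnt : Nontrivial Q := Finite.one_lt_card_iff_nontrivial.mp (by omega)
      haveI := hpQ.center_nontrivial
      obtain ⟨z0, hz0⟩ := exists_ne (1 : Subgroup.center Q)
      set z : Q := (z0 : Q) with hzdef
      have hzc : ∀ v : Q, z * v = v * z := fun v => (Subgroup.mem_center_iff.mp z0.2 v).symm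
      have hz1 : z ≠ 1 := fun h => hz0 (Subtype.ext h)
      haveI hN : (Subgroup.zpowers z).Normal := by
        constructor
        intro a ha g
        obtain ⟨j, rfl⟩ := Subgroup.mem_zpowers_iff.mp ha
        have hc : Commute g z := (hzc g).symm
        have : g * z ^ j * g⁻¹ = z ^ j := by
          rw [(hc.zpow_right j).eq, mul_inv_cancel_right]
        rw [this]
        exact ha
      set K := Subgroup.zpowers z with hK
      set Q' := Q ⧸ K with hQ'
      have hpQ' : IsPGroup p Q' := hpQ.to_quotient K
      have hc1 : Nat.card Q = Nat.card Q' * Nat.card K :=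
        Subgroup.card_eq_card_quotient_mul_card_subgroup K
      have hc2 : 1 < Nat.card K := by
        rw [Finite.one_lt_card_iff_nontrivial]
        exact ⟨⟨⟨z, Subgroup.mem_zpowers z⟩, 1, fun h => hz1 (congrArg Subtype.val h)⟩⟩
      have hc3 : 0 < Nat.card Q' := Nat.card_pos
      have hcard' : Nat.card Q' ≤ n := by
        have h2 : 2 * Nat.card Q' ≤ Nat.card Q := by
          rw [hc1, mul_comm]
          exact Nat.mul_le_mul_left _ hc2
        omega
      obtain ⟨m', hm'pos, hm'⟩ := IH Q' hcard' hpQ' G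
      set φ := mapDomainRingHom k ((MonoidHom.id G).prodMap (QuotientGroup.mk' K)) with hφ
      have hcomp : ∀ s : MonoidAlgebra k (G × Q),
          mapDomainRingHom k (MonoidHom.fst G Q') (φ s)
            = mapDomainRingHom k (MonoidHom.fst G Q) s := by
        intro s
        rw [hφ, mdrh_apply, mdrh_apply, mdrh_apply, ← UCB.mapDomain_comp]
        rfl
      set σ : MonoidAlgebra k (G × Q) := single ((1 : G), z) (1 : k) with hσdef
      have hwc : ∀ v : G × Q, ((1 : G), z) * v = v * ((1 : G), z) := by
        intro v
        ext
        · simp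
        · exact hzc v.2
      have hσ : ∀ r, σ * r = r * σ := fun r => single_central hwc r
      set ζ : MonoidAlgebra k (G × Q) := σ - 1 with hζdef
      have hζ : ∀ r, ζ * r = r * ζ := fun r => by
        rw [hζdef, sub_mul, mul_sub, hσ r, mul_one, one_mul]
      haveI : CharP (MonoidAlgebra k (G × Q)) p := by
        apply charP_of_injective_ringHom
          (f := MonoidAlgebra.singleOneRingHom (R := k) (M := G × Q))
        intro a b h
        simpa using congrArg (fun (x : MonoidAlgebra k (G × Q)) => x.coeff 1) h
      obtain ⟨a, haz⟩ := hpQ z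
      have hζpow : ζ ^ p ^ a = 0 := by
        rw [hζdef, sub_pow_char_pow_of_commute p a (Commute.one_right σ), one_pow, hσdef,
          single_pow]
        have h1 : ((1 : G), z) ^ p ^ a = ((1 : G), (1 : Q)) := by
          rw [Prod.pow_mk, one_pow, haz]
        rw [h1, one_pow]
        show (1 : MonoidAlgebra k (G × Q)) - 1 = 0
        rw [sub_self]
      -- the kernel of φ is contained in ζ * R
      have hsingle_red : ∀ (x : G × Q) (c : k), ∃ r,
          single x c = ζ * r + single (x.1, (QuotientGroup.mk x.2 : Q').out) c := by
        intro x c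
        have hmem : x.2⁻¹ * (QuotientGroup.mk x.2 : Q').out ∈ K := by
          rw [← QuotientGroup.eq]
          exact (Quotient.out_eq' _).symm
        obtain ⟨j, hj⟩ := Subgroup.mem_zpowers_iff.mp hmem
        have hzo : 0 < orderOf z := orderOf_pos z
        set m0 : ℕ := (j % (orderOf z : ℤ)).toNat with hm0
        have hn : z ^ m0 = x.2⁻¹ * (QuotientGroup.mk x.2 : Q').out := by
          have h1 : ((m0 : ℤ)) = j % (orderOf z : ℤ) :=
            Int.toNat_of_nonneg (Int.emod_nonneg j (by exact_mod_cast hzo.ne'))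
          rw [← zpow_natCast, h1, zpow_mod_orderOf, hj]
        have hout : (x.1, (QuotientGroup.mk x.2 : Q').out) = x * ((1 : G), z) ^ m0 := by
          rw [Prod.pow_mk, one_pow]
          ext
          · simp
          · show (QuotientGroup.mk x.2 : Q').out = (x * ((1 : G), z ^ m0)).2
            rw [Prod.snd_mul, hn]
            group
        refine ⟨-(single x c * ∑ i ∈ Finset.range m0, σ ^ i), ?_⟩
        have hgeom : (∑ i ∈ Finset.range m0, σ ^ i) * ζ = σ ^ m0 - 1 := by
          rw [hζdef]; exact geom_sum_mul σ m0
        have hs : single (x * ((1 : G), z) ^ m0) c = single x c * σ ^ m0 := by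
          rw [hσdef, single_pow, single_mul_single, one_pow, mul_one]
        have hkey : ζ * -(single x c * ∑ i ∈ Finset.range m0, σ ^ i)
            = single x c - single x c * σ ^ m0 := by
          rw [mul_neg, hζ, mul_assoc, hgeom, mul_sub, mul_one, neg_sub]
        rw [hout, hs, hkey]
        abel
      set ρ : MonoidAlgebra k (G × Q') → MonoidAlgebra k (G × Q) :=
        fun t => MonoidAlgebra.mapDomain (fun y : G × Q' => (y.1, y.2.out)) t with hρ
      have hρ0 : ρ 0 = 0 := MonoidAlgebra.mapDomain_zero _
      have hρadd : ∀ a b, ρ (a + b) = ρ a + ρ b := fun a b => MonoidAlgebra.mapDomain_add _ a b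
      have hρsingle : ∀ (y : G × Q') (c : k),
          ρ (single y c) = single (y.1, y.2.out) c :=
        fun y c => MonoidAlgebra.mapDomain_single
      have hred' : ∀ t : MonoidAlgebra k (G × Q), ∃ r, t = ζ * r + ρ (φ t) := by
          intro t
          induction t using MonoidAlgebra.induction_linear with
          | zero => exact ⟨0, by rw [map_zero, hρ0, mul_zero, add_zero]⟩
          | add f g hf hg =>
            obtain ⟨r1, h1⟩ := hf
            obtain ⟨r2, h2⟩ := hg
            refine ⟨r1 + r2, ?_⟩
            rw [map_add, hρadd, mul_add]
            conv_lhs => rw [h1, h2]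
            abel
          | single x c =>
            obtain ⟨r, hr⟩ := hsingle_red x c
            refine ⟨r, ?_⟩
            have hφs : φ (single x c)
                = single ((x.1, (QuotientGroup.mk x.2 : Q'))) c := by
              rw [hφ, mdrh_apply, MonoidAlgebra.mapDomain_single]
              rfl
            rw [hφs, hρsingle]
            exact hr
      have hred : ∀ t : MonoidAlgebra k (G × Q), φ t = 0 → ∃ r, t = ζ * r := by
        intro t ht
        obtain ⟨r, hr⟩ := hred' t
        rw [ht, hρ0, add_zero] at hr
        exact ⟨r, hr⟩
      refine ⟨m' * p ^ a, Nat.mul_pos hm'pos (pow_pos (Nat.Prime.pos Fact.out) a), fun s hs => ?_⟩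
      have h1 : φ s ^ m' = 0 := hm' (φ s) (by rw [hcomp s]; exact hs)
      have h2 : φ (s ^ m') = 0 := by rw [map_pow, h1]
      obtain ⟨r, hr⟩ := hred _ h2
      rw [pow_mul, hr]
      have hcom : Commute ζ r := hζ r
      rw [hcom.mul_pow, hζpow, zero_mul]

noncomputable def nTrunc {G : Type} [Group G] (N : Subgroup G) (a : MonoidAlgebra k G) :
    MonoidAlgebra k ↥N :=
  MonoidAlgebra.ofCoeff (Finsupp.subtypeDomain (· ∈ N) a.coeff)

theorem nTrunc_add {G : Type} [Group G] (N : Subgroup G) (a b : MonoidAlgebra k G) :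
    nTrunc (k := k) N (a + b) = nTrunc N a + nTrunc N b :=
  congrArg MonoidAlgebra.ofCoeff Finsupp.subtypeDomain_add

theorem nTrunc_zero {G : Type} [Group G] (N : Subgroup G) :
    nTrunc (k := k) N 0 = 0 :=
  congrArg MonoidAlgebra.ofCoeff Finsupp.subtypeDomain_zero

theorem subtypeDomain_single_mem {G : Type} [Group G] (N : Subgroup G) {g : G} (hg : g ∈ N)
    (r : k) :
    nTrunc N (single g r) = single (⟨g, hg⟩ : ↥N) r := by
  show (MonoidAlgebra.ofCoeff (Finsupp.subtypeDomain (· ∈ N) (single g r).coeff) : MonoidAlgebra k ↥N)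
      = single (⟨g, hg⟩ : ↥N) r
  classical
  ext a
  rw [MonoidAlgebra.coeff_ofCoeff, Finsupp.subtypeDomain_apply, MonoidAlgebra.coeff_single,
    MonoidAlgebra.coeff_single]
  simp only [Finsupp.single_apply]
  have h1 : ((⟨g, hg⟩ : ↥N) = a) ↔ g = ↑a := by
    rw [Subtype.ext_iff]
  exact if_congr h1.symm rfl rfl

theorem subtypeDomain_single_not_mem {G : Type} [Group G] (N : Subgroup G) {g : G}
    (hg : g ∉ N) (r : k) :
    nTrunc N (single g r) = (0 : MonoidAlgebra k ↥N) := by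
  show (MonoidAlgebra.ofCoeff (Finsupp.subtypeDomain (· ∈ N) (single g r).coeff) : MonoidAlgebra k ↥N) = 0
  ext a
  rw [MonoidAlgebra.coeff_ofCoeff, Finsupp.subtypeDomain_apply, MonoidAlgebra.coeff_single]
  rw [Finsupp.single_eq_of_ne' (fun h => hg (by rw [h]; exact a.2))]
  rfl

theorem trunc_mul {G : Type} [Group G] (N : Subgroup G) (a : MonoidAlgebra k G)
    (b : MonoidAlgebra k ↥N) :
    nTrunc N (a * mapDomainRingHom k N.subtype b) = nTrunc N a * b := by
  induction a using MonoidAlgebra.induction_linear with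
  | zero => rw [zero_mul, nTrunc_zero, zero_mul]
  | add a1 a2 h1 h2 =>
    rw [add_mul, nTrunc_add, nTrunc_add, h1, h2, add_mul]
  | single g r =>
    induction b using MonoidAlgebra.induction_linear with
    | zero => rw [map_zero, mul_zero, nTrunc_zero, mul_zero]
    | add b1 b2 h1 h2 => rw [map_add, mul_add, nTrunc_add, h1, h2, mul_add]
    | single x c =>
      rw [mdrh_apply, MonoidAlgebra.mapDomain_single, single_mul_single, Subgroup.coe_subtype]
      by_cases hg : g ∈ N
      · rw [subtypeDomain_single_mem N (N.mul_mem hg x.2), subtypeDomain_single_mem N hg,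
          single_mul_single]
        congr 1
      · rw [subtypeDomain_single_not_mem N hg,
          subtypeDomain_single_not_mem N (fun hc => hg ((N.mul_mem_cancel_right x.2).mp hc)),
          zero_mul]

theorem main_trunc (p : ℕ) [Fact p.Prime] [CharP k p] {G : Type} [Group G] [Finite G]
    (N : Subgroup G) [N.Normal] (hpq : IsPGroup p (G ⧸ N)) (f : MonoidAlgebra k G)
    (hc : ∀ a, f * a = a * f) (hi : f * f = f) :
    mapDomainRingHom k N.subtype (nTrunc N f) * f = f := by
  classical
  obtain ⟨m, hm0, hm⟩ := ker_fst_nilpotent (k := k) p (Nat.card (G ⧸ N)) (G ⧸ N) le_rfl hpq G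
  set δ : G →* G × (G ⧸ N) := (MonoidHom.id G).prod (QuotientGroup.mk' N) with hδ
  set d := mapDomainRingHom k δ f with hd'
  set u := mapDomainRingHom k (MonoidHom.inl G (G ⧸ N)) f with hu'
  have hinl : ∀ (b : MonoidAlgebra k G) (q : G ⧸ N),
      mapDomainRingHom k (MonoidHom.inl G (G ⧸ N)) b * single ((1 : G), q) 1
        = single ((1 : G), q) 1 * mapDomainRingHom k (MonoidHom.inl G (G ⧸ N)) b := by
    intro b q
    induction b using MonoidAlgebra.induction_linear with
    | zero => simp
    | add x y hx hy => rw [map_add, add_mul, mul_add, hx, hy]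
    | single h c =>
      rw [mdrh_apply, MonoidAlgebra.mapDomain_single]
      show single ((h, (1 : G ⧸ N))) c * single ((1 : G), q) 1
        = single ((1 : G), q) 1 * single ((h, (1 : G ⧸ N))) c
      rw [single_mul_single, single_mul_single]
      have h1 : ((h, (1 : G ⧸ N)) * ((1 : G), q)) = (((1 : G), q) * (h, (1 : G ⧸ N))) := by
        ext <;> simp
      rw [h1, mul_comm c 1]
  have hu : ∀ r, u * r = r * u := by
    apply comm_all
    intro x c
    have hdec : single x c = single ((x.1, (1 : G ⧸ N))) c * single ((1 : G), x.2) 1 := by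
      rw [single_mul_single, mul_one]
      congr 1
      ext <;> simp
    have h1 : u * single (x.1, (1 : G ⧸ N)) c = single (x.1, (1 : G ⧸ N)) c * u := by
      have e : single ((x.1, (1 : G ⧸ N))) c
          = mapDomainRingHom k (MonoidHom.inl G (G ⧸ N)) (single x.1 c) := by
        rw [mdrh_apply, MonoidAlgebra.mapDomain_single]
        rfl
      rw [hu', e, ← map_mul, ← map_mul, hc]
    rw [hdec, ← mul_assoc, h1, mul_assoc, hu', hinl f x.2, ← mul_assoc]
  have hΨι : ∀ x : MonoidAlgebra k G,
      mapDomainRingHom k (MonoidHom.fst G (G ⧸ N))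
        (mapDomainRingHom k (MonoidHom.inl G (G ⧸ N)) x) = x := by
    intro x
    rw [mdrh_apply, mdrh_apply, ← UCB.mapDomain_comp]
    have h1 : (⇑(MonoidHom.fst G (G ⧸ N)) ∘ ⇑(MonoidHom.inl G (G ⧸ N))) = id := rfl
    rw [h1, UCB.mapDomain_id]
  have hΨδ : ∀ x : MonoidAlgebra k G,
      mapDomainRingHom k (MonoidHom.fst G (G ⧸ N)) (mapDomainRingHom k δ x) = x := by
    intro x
    rw [mdrh_apply, mdrh_apply, ← UCB.mapDomain_comp]
    have h1 : (⇑(MonoidHom.fst G (G ⧸ N)) ∘ ⇑δ) = id := rfl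
    rw [h1, UCB.mapDomain_id]
  have hψ : mapDomainRingHom k (MonoidHom.fst G (G ⧸ N)) (u - d * u) = 0 := by
    rw [map_sub, map_mul, hd', hu', hΨι f, hΨδ f, hi, sub_self]
  have h1 : d * d = d := by rw [hd', ← map_mul, hi]
  have h2 : u * u = u := by rw [hu', ← map_mul, hi]
  have h3 : u * (d * u) = d * u := by rw [hu (d * u), mul_assoc, h2]
  have h4 : (d * u) * (d * u) = d * u := by rw [mul_assoc d u (d * u), h3, ← mul_assoc, h1]
  have h5 : (d * u) * u = d * u := by rw [mul_assoc, h2]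
  have hss : (u - d * u) * (u - d * u) = u - d * u := by
    rw [sub_mul, mul_sub, mul_sub, h2, h3, h4, h5, sub_self, sub_zero]
  have hs0 : u - d * u = 0 := by
    have h := hm _ hψ
    rwa [idem_pow hss hm0] at h
  have hdu : d * u = u := (sub_eq_zero.mp hs0).symm
  set Θ : MonoidAlgebra k (G × (G ⧸ N)) → MonoidAlgebra k G :=
    fun X => MonoidAlgebra.ofCoeff (Finsupp.mapDomain Prod.fst
      (Finsupp.filter (fun x : G × (G ⧸ N) => x.2 = 1) X.coeff)) with hΘ
  have hΘ0 : Θ 0 = 0 := by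
    show MonoidAlgebra.ofCoeff (Finsupp.mapDomain Prod.fst
      (Finsupp.filter (fun x : G × (G ⧸ N) => x.2 = 1)
        (0 : MonoidAlgebra k (G × (G ⧸ N))).coeff)) = 0
    rw [MonoidAlgebra.coeff_zero, Finsupp.filter_zero, Finsupp.mapDomain_zero,
      MonoidAlgebra.ofCoeff_zero]
  have hΘadd : ∀ X Y, Θ (X + Y) = Θ X + Θ Y := by
    intro X Y
    show MonoidAlgebra.ofCoeff (Finsupp.mapDomain Prod.fst
        (Finsupp.filter (fun x : G × (G ⧸ N) => x.2 = 1) (X + Y).coeff))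
      = MonoidAlgebra.ofCoeff (Finsupp.mapDomain Prod.fst
          (Finsupp.filter (fun x : G × (G ⧸ N) => x.2 = 1) X.coeff))
        + MonoidAlgebra.ofCoeff (Finsupp.mapDomain Prod.fst
          (Finsupp.filter (fun x : G × (G ⧸ N) => x.2 = 1) Y.coeff))
    rw [MonoidAlgebra.coeff_add, Finsupp.filter_add, Finsupp.mapDomain_add,
      MonoidAlgebra.ofCoeff_add]
  have hΘsingle : ∀ (x : G × (G ⧸ N)) (c : k),
      Θ (single x c) = if x.2 = 1 then single x.1 c else 0 := by
    intro x c
    show MonoidAlgebra.ofCoeff (Finsupp.mapDomain Prod.fst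
        (Finsupp.filter (fun y : G × (G ⧸ N) => y.2 = 1) (single x c).coeff))
      = if x.2 = 1 then single x.1 c else 0
    by_cases hx : x.2 = 1
    · rw [if_pos hx, MonoidAlgebra.coeff_single,
        Finsupp.filter_single_of_pos (p := fun y : G × (G ⧸ N) => y.2 = 1) hx,
        Finsupp.mapDomain_single, MonoidAlgebra.ofCoeff_single]
    · rw [if_neg hx, MonoidAlgebra.coeff_single,
        Finsupp.filter_single_of_neg (p := fun y : G × (G ⧸ N) => y.2 = 1) hx,
        Finsupp.mapDomain_zero, MonoidAlgebra.ofCoeff_zero]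
  have hΘu : ∀ b : MonoidAlgebra k G,
      Θ (mapDomainRingHom k (MonoidHom.inl G (G ⧸ N)) b) = b := by
    intro b
    induction b using MonoidAlgebra.induction_linear with
    | zero => rw [map_zero, hΘ0]
    | add x y hx hy => rw [map_add, hΘadd, hx, hy]
    | single g c =>
      rw [mdrh_apply, MonoidAlgebra.mapDomain_single,
        show ((MonoidHom.inl G (G ⧸ N)) g) = ((g, (1 : G ⧸ N)) : G × (G ⧸ N)) from rfl]
      rw [hΘsingle ((g, (1 : G ⧸ N)) : G × (G ⧸ N)) c, if_pos rfl]
  have key : ∀ (a b : MonoidAlgebra k G),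
      Θ (mapDomainRingHom k δ a * mapDomainRingHom k (MonoidHom.inl G (G ⧸ N)) b)
        = mapDomainRingHom k N.subtype (nTrunc N a) * b := by
    intro a b
    induction a using MonoidAlgebra.induction_linear with
    | zero => rw [map_zero, zero_mul, hΘ0, nTrunc_zero, map_zero, zero_mul]
    | add a1 a2 ha1 ha2 =>
      rw [map_add, add_mul, hΘadd, ha1, ha2, nTrunc_add, map_add, add_mul]
    | single g r =>
      induction b using MonoidAlgebra.induction_linear with
      | zero => rw [map_zero, mul_zero, hΘ0, mul_zero]
      | add b1 b2 hb1 hb2 => rw [map_add, mul_add, hΘadd, hb1, hb2, mul_add]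
      | single h c =>
        rw [mdrh_apply, MonoidAlgebra.mapDomain_single, mdrh_apply, MonoidAlgebra.mapDomain_single,
          show (δ g) = ((g, (QuotientGroup.mk g : G ⧸ N)) : G × (G ⧸ N)) from rfl,
          show ((MonoidHom.inl G (G ⧸ N)) h) = ((h, (1 : G ⧸ N)) : G × (G ⧸ N)) from rfl,
          single_mul_single]
        rw [show ((g, (QuotientGroup.mk g : G ⧸ N)) * (h, (1 : G ⧸ N)) : G × (G ⧸ N))
            = ((g * h, (QuotientGroup.mk g : G ⧸ N)) : G × (G ⧸ N)) by ext <;> simp]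
        rw [hΘsingle]
        by_cases hg : g ∈ N
        · rw [if_pos ((QuotientGroup.eq_one_iff g).mpr hg), subtypeDomain_single_mem N hg,
            mdrh_apply, MonoidAlgebra.mapDomain_single, single_mul_single]
          rfl
        · rw [if_neg (fun h1 => hg ((QuotientGroup.eq_one_iff g).mp h1)),
            subtypeDomain_single_not_mem N hg, map_zero, zero_mul]
  have hfin := congrArg Θ hdu
  rw [hd', hu', key f f, hΘu f] at hfin
  exact hfin

theorem idem_mul {R : Type*} [Semiring R] {a b : R} (ha : a * a = a) (hb : b * b = b)
    (hab : a * b = b * a) : (a * b) * (a * b) = a * b := by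
  rw [mul_assoc, ← mul_assoc b a b, ← hab, mul_assoc a b b, hb, ← mul_assoc, ha]

end UCB

/-- A block idempotent of a ring `R`: a nonzero central idempotent that is primitive among
central idempotents. -/
def IsBlockIdempotent {R : Type} [Ring R] (e : R) : Prop :=
  e ≠ 0 ∧ IsIdempotentElem e ∧ e ∈ Set.center R ∧
    ∀ f g : R, IsIdempotentElem f → IsIdempotentElem g → f ∈ Set.center R →
      g ∈ Set.center R → f * g = 0 → f + g = e → f = 0 ∨ g = 0

/-- Let `N ⊴ G` with `G/N` a `p`-group, `k` a field of characteristic `p`,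
and `e` a `G`-stable block idempotent of `kN`.  Then the image of `e` in `kG` is central, and
there is a unique block idempotent `f` of `kG` with `f · e ≠ 0`; i.e. a unique block of `kG`
covers the `G`-stable block of `kN` corresponding to `e`. -/
theorem unique_covering_block_of_p_extension
    (k : Type) [Field k] (p : ℕ) [Fact p.Prime] [CharP k p]
    (G : Type) [Group G] [Finite G] (N : Subgroup G) [N.Normal]
    (hpq : IsPGroup p (G ⧸ N))
    (e : MonoidAlgebra k ↥N) (he : IsBlockIdempotent e)
    (hstable : ∀ g : G,
      MonoidAlgebra.single g (1 : k) * (MonoidAlgebra.mapDomainRingHom k N.subtype e) *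
          MonoidAlgebra.single g⁻¹ (1 : k) =
        MonoidAlgebra.mapDomainRingHom k N.subtype e) :
    (MonoidAlgebra.mapDomainRingHom k N.subtype e) ∈ Set.center (MonoidAlgebra k G) ∧
    ∃! f : MonoidAlgebra k G, IsBlockIdempotent f ∧
      f * (MonoidAlgebra.mapDomainRingHom k N.subtype e) ≠ 0 := by
  classical
  set μ := MonoidAlgebra.mapDomainRingHom k N.subtype with hμ
  set E := μ e with hEdef
  have hμinj : Function.Injective μ := by
    intro x y hxy
    rw [hμ, UCB.mdrh_apply, UCB.mdrh_apply] at hxy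
    exact MonoidAlgebra.mapDomain_injective N.subtype_injective hxy
  have hgE : ∀ g : G, MonoidAlgebra.single g (1 : k) * E = E * MonoidAlgebra.single g 1 := by
    intro g
    have h : (MonoidAlgebra.single g (1 : k) * E * MonoidAlgebra.single g⁻¹ 1) *
        MonoidAlgebra.single g 1 = E * MonoidAlgebra.single g 1 := by rw [hstable g]
    rw [mul_assoc (MonoidAlgebra.single g (1 : k) * E), MonoidAlgebra.single_mul_single,
      inv_mul_cancel, one_mul, ← MonoidAlgebra.one_def, mul_one] at h
    exact h
  have hEc : ∀ a : MonoidAlgebra k G, a * E = E * a := by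
    intro a
    induction a using MonoidAlgebra.induction_linear with
    | zero => rw [zero_mul, mul_zero]
    | add x y hx hy => rw [add_mul, mul_add, hx, hy]
    | single g c =>
      show MonoidAlgebra.single g c * E = E * MonoidAlgebra.single g c
      have h1 : MonoidAlgebra.single g c
          = MonoidAlgebra.single (1 : G) c * MonoidAlgebra.single g (1 : k) := by
        rw [MonoidAlgebra.single_mul_single, one_mul, mul_one]
      rw [h1, mul_assoc, hgE g, ← mul_assoc, MonoidAlgebra.single_one_comm, mul_assoc]
  have hEcen : E ∈ Set.center (MonoidAlgebra k G) := Semigroup.mem_center_iff.mpr hEc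
  have hE0 : E ≠ 0 := by
    intro h
    apply he.1
    apply hμinj
    rw [map_zero, ← hEdef]
    exact h
  have hEi : E * E = E := by rw [hEdef, ← map_mul, he.2.1]
  have hprimE : ∀ f g : MonoidAlgebra k G, IsIdempotentElem f → IsIdempotentElem g →
      f ∈ Set.center (MonoidAlgebra k G) → g ∈ Set.center (MonoidAlgebra k G) →
      f * g = 0 → f + g = E → f = 0 ∨ g = 0 := by
    intro f g hfi hgi hfc hgc hfg hfgE
    have hfcomm : ∀ a, f * a = a * f := fun a => (Semigroup.mem_center_iff.mp hfc a).symm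
    have hgcomm : ∀ a, g * a = a * g := fun a => (Semigroup.mem_center_iff.mp hgc a).symm
    have hgf : g * f = 0 := by rw [← hfcomm g]; exact hfg
    have hMf := UCB.main_trunc p N hpq f hfcomm hfi
    have hMg := UCB.main_trunc p N hpq g hgcomm hgi
    have hπ1 : UCB.nTrunc N (1 : MonoidAlgebra k G) = 1 := by
      show UCB.nTrunc N (MonoidAlgebra.single (1 : G) (1 : k))
        = (MonoidAlgebra.single (1 : ↥N) (1 : k) : MonoidAlgebra k ↥N)
      rw [UCB.subtypeDomain_single_mem N N.one_mem]
      rfl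
    have hπE : UCB.nTrunc N E = e := by
      have h := UCB.trunc_mul N 1 e
      rw [one_mul, hπ1, one_mul] at h
      exact h
    have hfE : f * E = f := by rw [← hfgE, mul_add, hfi, hfg, add_zero]
    have hgEr : g * E = g := by rw [← hfgE, mul_add, hgf, hgi, zero_add]
    have hEg : E * g = g := by rw [← hEc g]; exact hgEr
    have hEf : E * f = f := by rw [← hEc f]; exact hfE
    have hπf_e : UCB.nTrunc N f * e = UCB.nTrunc N f := by
      have h := UCB.trunc_mul N f e
      rw [← hEdef, hfE] at h
      exact h.symm
    have hπg_e : UCB.nTrunc N g * e = UCB.nTrunc N g := by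
      have h := UCB.trunc_mul N g e
      rw [← hEdef, hgEr] at h
      exact h.symm
    have hsum : UCB.nTrunc N f + UCB.nTrunc N g = e := by
      rw [← UCB.nTrunc_add, hfgE, hπE]
    have hμsum : μ (UCB.nTrunc N f) + μ (UCB.nTrunc N g) = E := by
      rw [← map_add, hsum, ← hEdef]
    have hμf_E : μ (UCB.nTrunc N f) * E = μ (UCB.nTrunc N f) := by
      rw [hEdef, ← map_mul, hπf_e]
    have hμg_E : μ (UCB.nTrunc N g) * E = μ (UCB.nTrunc N g) := by
      rw [hEdef, ← map_mul, hπg_e]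
    have hμf_g : μ (UCB.nTrunc N f) * g = 0 := by
      have h1 : μ (UCB.nTrunc N f) = E - μ (UCB.nTrunc N g) := by
        rw [← hμsum, add_sub_cancel_right]
      rw [h1, sub_mul, hEg, hMg, sub_self]
    have hμg_f : μ (UCB.nTrunc N g) * f = 0 := by
      have h1 : μ (UCB.nTrunc N g) = E - μ (UCB.nTrunc N f) := by
        rw [← hμsum, add_sub_cancel_left]
      rw [h1, sub_mul, hEf, hMf, sub_self]
    have hfeq : μ (UCB.nTrunc N f) = f := by
      calc μ (UCB.nTrunc N f) = μ (UCB.nTrunc N f) * E := hμf_E.symm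
        _ = μ (UCB.nTrunc N f) * (f + g) := by rw [hfgE]
        _ = μ (UCB.nTrunc N f) * f + μ (UCB.nTrunc N f) * g := mul_add _ _ _
        _ = f + 0 := by rw [hMf, hμf_g]
        _ = f := add_zero f
    have hgeq : μ (UCB.nTrunc N g) = g := by
      calc μ (UCB.nTrunc N g) = μ (UCB.nTrunc N g) * E := hμg_E.symm
        _ = μ (UCB.nTrunc N g) * (f + g) := by rw [hfgE]
        _ = μ (UCB.nTrunc N g) * f + μ (UCB.nTrunc N g) * g := mul_add _ _ _
        _ = 0 + g := by rw [hMg, hμg_f]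
        _ = g := zero_add g
    have hf1i : IsIdempotentElem (UCB.nTrunc N f) :=
      hμinj (by rw [map_mul, hfeq, hfi])
    have hg1i : IsIdempotentElem (UCB.nTrunc N g) :=
      hμinj (by rw [map_mul, hgeq, hgi])
    have hf1c : UCB.nTrunc N f ∈ Set.center (MonoidAlgebra k ↥N) := by
      rw [Semigroup.mem_center_iff]
      intro b
      apply hμinj
      rw [map_mul, map_mul, hfeq, ← hfcomm]
    have hg1c : UCB.nTrunc N g ∈ Set.center (MonoidAlgebra k ↥N) := by
      rw [Semigroup.mem_center_iff]
      intro b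
      apply hμinj
      rw [map_mul, map_mul, hgeq, ← hgcomm]
    have hfg1 : UCB.nTrunc N f * UCB.nTrunc N g = 0 :=
      hμinj (by rw [map_mul, hfeq, hgeq, hfg, map_zero])
    rcases he.2.2.2 _ _ hf1i hg1i hf1c hg1c hfg1 hsum with h | h
    · left; rw [← hfeq, h, map_zero]
    · right; rw [← hgeq, h, map_zero]
  refine ⟨hEcen, E, ⟨⟨hE0, hEi, hEcen, hprimE⟩, by rw [hEi]; exact hE0⟩, ?_⟩
  intro f hf
  obtain ⟨⟨hf0, hfi, hfc, hfprim⟩, hfE⟩ := hf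
  have hfcomm : ∀ a, a * f = f * a := Semigroup.mem_center_iff.mp hfc
  have ha_i : IsIdempotentElem (f * E) := UCB.idem_mul hfi hEi (hfcomm E).symm
  have hffE : f * (f * E) = f * E := by rw [← mul_assoc, hfi]
  have hfEf : (f * E) * f = f * E := by
    rw [mul_assoc, hfcomm E, ← mul_assoc, hfi]
  have hb_i : IsIdempotentElem (f - f * E) := by
    show (f - f * E) * (f - f * E) = f - f * E
    rw [sub_mul, mul_sub, mul_sub, hfi, hffE, hfEf, ha_i, sub_self, sub_zero]
  have hfEc : ∀ a, a * (f * E) = (f * E) * a := by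
    intro a
    rw [← mul_assoc, hfcomm a, mul_assoc, hEc a, ← mul_assoc]
  have hac : f * E ∈ Set.center (MonoidAlgebra k G) :=
    Semigroup.mem_center_iff.mpr hfEc
  have hbc : f - f * E ∈ Set.center (MonoidAlgebra k G) := by
    rw [Semigroup.mem_center_iff]
    intro a
    rw [mul_sub, sub_mul, hfcomm a, hfEc a]
  have horth : (f * E) * (f - f * E) = 0 := by
    rw [mul_sub, hfEf, ha_i, sub_self]
  rcases hfprim (f * E) (f - f * E) ha_i hb_i hac hbc horth (by abel) with h | h
  · exact absurd h hfE
  · have hffE2 : f = f * E := sub_eq_zero.mp h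
    have hEff : E * f = f := by rw [hfcomm E, ← hffE2]
    have hEmf_i : IsIdempotentElem (E - f) := by
      show (E - f) * (E - f) = E - f
      rw [sub_mul, mul_sub, mul_sub, hEi, hEff, ← hffE2, hfi, sub_self, sub_zero]
    have hEmf_c : E - f ∈ Set.center (MonoidAlgebra k G) := by
      rw [Semigroup.mem_center_iff]
      intro a
      rw [mul_sub, sub_mul, hEc a, hfcomm a]
    have horth2 : f * (E - f) = 0 := by
      rw [mul_sub, ← hffE2, hfi, sub_self]
    rcases hprimE f (E - f) hfi hEmf_i hfc hEmf_c horth2 (by abel) with h2 | h2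
    · exact absurd (by rw [h2, zero_mul]) hfE
    · rw [sub_eq_zero] at h2
      exact h2.symm
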